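/- For all integers r ≥ d ≥ 0, every d-complete subset C ⊆ F_2^r satisfies |C| ≥ Σ_{j=0}^{d−1} C(r, j). -/

import Mathlib

/-- A subset `C` of `F_2^r` is `d`-complete if through every point `v` there is a
`d`-flat contained in `C ∪ {v}`; i.e. there is a `d`-dimensional subspace `L`
with `v + (L \ {0}) ⊆ C`. -/
def KakeyaComplete (r d : ℕ) (C : Set (Fin r → ZMod 2)) : Prop :=
  ∀ v : Fin r → ZMod 2, ∃ L : Submodule (ZMod 2) (Fin r → ZMod 2),
    Module.finrank (ZMod 2) L = d ∧ ∀ x ∈ L, x ≠ 0 → v + x ∈ C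

/-- `gamma r d` is the smallest size of a `d`-complete subset of `F_2^r`. -/
noncomputable def gamma (r d : ℕ) : ℕ :=
  sInf {n | ∃ C : Finset (Fin r → ZMod 2), C.card = n ∧ KakeyaComplete r d ↑C}

/-- A subset `B` of `F_2^r` is `d`-non-blocking if for every `v` there is a
subspace `L` of dimension `r - d` (codimension `d`) with `(v + (L \ {0})) ∩ B = ∅`. -/
def KakeyaNonBlocking (r d : ℕ) (B : Set (Fin r → ZMod 2)) : Prop :=
  ∀ v : Fin r → ZMod 2, ∃ L : Submodule (ZMod 2) (Fin r → ZMod 2),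
    Module.finrank (ZMod 2) L = r - d ∧ ∀ x ∈ L, x ≠ 0 → v + x ∉ B

/-- `beta r d` is the largest size of a `d`-non-blocking subset of `F_2^r`. -/
noncomputable def beta (r d : ℕ) : ℕ :=
  sSup {n | ∃ B : Finset (Fin r → ZMod 2), B.card = n ∧ KakeyaNonBlocking r d ↑B}

open Finset MvPolynomial

private lemma zmod2_sum_pow_zero : ∑ s : ZMod 2, s ^ (0:ℕ) = 0 := by decide

private lemma sum_eval_eq_zero {d : ℕ} (P : MvPolynomial (Fin d) (ZMod 2))
    (hP : P.totalDegree < d) :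
    ∑ t : Fin d → ZMod 2, MvPolynomial.eval t P = 0 := by
  have he : ∀ t : Fin d → ZMod 2, MvPolynomial.eval t P
      = ∑ m ∈ P.support, P.coeff m * ∏ j, t j ^ m j := fun t => MvPolynomial.eval_eq' t P
  simp_rw [he]
  rw [Finset.sum_comm]
  apply Finset.sum_eq_zero
  intro m hm
  rw [← Finset.mul_sum]
  have hsum : (∑ t : Fin d → ZMod 2, ∏ j, t j ^ m j) = 0 := by
    have hps := Finset.prod_univ_sum (fun _ : Fin d => (Finset.univ : Finset (ZMod 2)))
      (fun j s => s ^ m j)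
    rw [Fintype.piFinset_univ] at hps
    rw [← hps]
    obtain ⟨j, hj⟩ : ∃ j, m j = 0 := by
      by_contra hc
      push_neg at hc
      have h1 : d ≤ ∑ j, m j := by
        calc d = ∑ _j : Fin d, 1 := by simp
        _ ≤ ∑ j, m j := Finset.sum_le_sum fun j _ => Nat.one_le_iff_ne_zero.mpr (hc j)
      have h2 : (∑ j, m j) ≤ P.totalDegree := by
        have h3 := MvPolynomial.le_totalDegree hm
        rwa [Finsupp.sum_fintype _ _ (fun _ => rfl)] at h3
      omega
    apply Finset.prod_eq_zero (Finset.mem_univ j)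
    rw [hj]
    exact zmod2_sum_pow_zero
  rw [hsum, mul_zero]

private lemma card_small_sets (r d : ℕ) :
    Fintype.card {S : Finset (Fin r) // S.card < d} = ∑ j ∈ Finset.range d, r.choose j := by
  rw [Fintype.card_subtype]
  have hun : (Finset.univ.filter fun S : Finset (Fin r) => S.card < d)
      = (Finset.range d).biUnion fun j =>
          Finset.univ.filter fun S : Finset (Fin r) => S.card = j := by
    ext S
    simp only [Finset.mem_filter, Finset.mem_univ, true_and, Finset.mem_biUnion,
      Finset.mem_range]
    constructor
    · intro hS; exact ⟨S.card, hS, rfl⟩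
    · rintro ⟨j, hj, rfl⟩; exact hj
  rw [hun, Finset.card_biUnion]
  · refine Finset.sum_congr rfl fun j _ => ?_
    rw [← Fintype.card_subtype, Fintype.card_finset_len, Fintype.card_fin]
  · intro a _ b _ hab
    rw [Function.onFun, Finset.disjoint_left]
    intro S hS hS'
    simp only [Finset.mem_filter] at hS hS'
    exact hab (hS.2 ▸ hS'.2 ▸ rfl)

theorem complete_lower_bound (r d : ℕ) (h : d ≤ r) (C : Finset (Fin r → ZMod 2))
    (hC : KakeyaComplete r d ↑C) :
    ∑ j ∈ Finset.range d, r.choose j ≤ C.card := by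
  rcases Nat.eq_zero_or_pos d with hd0 | hd0
  · simp [hd0]
  by_contra hlt
  push_neg at hlt
  set ι := {S : Finset (Fin r) // S.card < d} with hι
  -- the evaluation function
  set g : (ι → ZMod 2) → (Fin r → ZMod 2) → ZMod 2 :=
    fun c v => ∑ S : ι, c S * ∏ i ∈ S.1, v i with hg
  let E : (ι → ZMod 2) →ₗ[ZMod 2] ({v // v ∈ C} → ZMod 2) :=
    { toFun := fun c w => g c w.1
      map_add' := by
        intro a b; funext w
        simp [hg, add_mul, Finset.sum_add_distrib]
      map_smul' := by
        intro a b; funext w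
        simp [hg, Finset.mul_sum, mul_assoc] }
  have hni : ¬ Function.Injective E := by
    intro hinj
    have hle := LinearMap.finrank_le_finrank_of_injective hinj
    rw [Module.finrank_fintype_fun_eq_card, Module.finrank_fintype_fun_eq_card,
      Fintype.card_coe, card_small_sets] at hle
    omega
  rw [← LinearMap.ker_eq_bot] at hni
  obtain ⟨c, hcker, hcne⟩ := Submodule.ne_bot_iff _ |>.mp hni
  have hEc : E c = 0 := hcker
  have hfC : ∀ v ∈ C, g c v = 0 := by
    intro v hv
    have := congrFun hEc ⟨v, hv⟩
    exact this
  -- g c vanishes everywhere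
  have hf : ∀ v : Fin r → ZMod 2, g c v = 0 := by
    intro v
    obtain ⟨L, hLd, hLC⟩ := hC v
    let b : Module.Basis (Fin d) (ZMod 2) L := Module.finBasisOfFinrankEq (ZMod 2) L hLd
    set w : Fin d → (Fin r → ZMod 2) := fun j => (b j : Fin r → ZMod 2) with hw
    set P : MvPolynomial (Fin d) (ZMod 2) :=
      ∑ S : ι, MvPolynomial.C (c S) * ∏ i ∈ S.1,
        (MvPolynomial.C (v i) + ∑ j : Fin d, MvPolynomial.X j * MvPolynomial.C (w j i))
      with hP
    have hdeg : P.totalDegree < d := by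
      rw [hP]
      refine lt_of_le_of_lt (MvPolynomial.totalDegree_finset_sum _ _) ?_
      rw [Finset.sup_lt_iff (by exact_mod_cast hd0)]
      intro S _
      calc (MvPolynomial.C (c S) * ∏ i ∈ S.1,
            (MvPolynomial.C (v i) + ∑ j : Fin d,
              MvPolynomial.X j * MvPolynomial.C (w j i))).totalDegree
          ≤ (MvPolynomial.C (c S)).totalDegree + (∏ i ∈ S.1,
            (MvPolynomial.C (v i) + ∑ j : Fin d,
              MvPolynomial.X j * MvPolynomial.C (w j i))).totalDegree :=
            MvPolynomial.totalDegree_mul _ _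
        _ ≤ 0 + ∑ i ∈ S.1, (MvPolynomial.C (v i) + ∑ j : Fin d,
              MvPolynomial.X j * MvPolynomial.C (w j i)).totalDegree := by
            rw [MvPolynomial.totalDegree_C]
            exact Nat.add_le_add_left (MvPolynomial.totalDegree_finset_prod _ _) 0
        _ ≤ ∑ _i ∈ S.1, 1 := by
            rw [zero_add]
            refine Finset.sum_le_sum fun i _ => ?_
            refine le_trans (MvPolynomial.totalDegree_add _ _) ?_
            rw [max_le_iff]
            constructor
            · simp [MvPolynomial.totalDegree_C]
            · refine le_trans (MvPolynomial.totalDegree_finset_sum _ _) ?_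
              refine Finset.sup_le fun j _ => ?_
              refine le_trans (MvPolynomial.totalDegree_mul _ _) ?_
              simp [MvPolynomial.totalDegree_C, MvPolynomial.totalDegree_X]
        _ = S.1.card := by simp
        _ < d := S.2
    have heval : ∀ t : Fin d → ZMod 2,
        MvPolynomial.eval t P = g c (v + ∑ j, t j • w j) := by
      intro t
      rw [hP, hg]
      simp only [map_sum, map_mul, map_prod, map_add, MvPolynomial.eval_C,
        MvPolynomial.eval_X]
      refine Finset.sum_congr rfl fun S _ => ?_
      congr 1
      refine Finset.prod_congr rfl fun i _ => ?_
      simp [Finset.sum_apply, Pi.smul_apply, smul_eq_mul]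
    have hzero : ∀ t : Fin d → ZMod 2, t ≠ 0 → MvPolynomial.eval t P = 0 := by
      intro t ht
      have hx : ∀ _ : Unit, True := fun _ => trivial
      set xL : L := ∑ j, t j • b j with hxL
      have hxcoe : ((xL : Fin r → ZMod 2)) = ∑ j, t j • w j := by
        rw [hxL]
        push_cast
        rfl
      have hxne : (xL : Fin r → ZMod 2) ≠ 0 := by
        intro h0
        have : xL = 0 := Submodule.coe_eq_zero.mp h0
        rw [hxL] at this
        have := (Fintype.linearIndependent_iff.mp b.linearIndependent) t this
        exact ht (funext this)
      have hmem : (xL : Fin r → ZMod 2) ∈ L := xL.2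
      have hvC : v + (xL : Fin r → ZMod 2) ∈ (C : Set (Fin r → ZMod 2)) :=
        hLC _ hmem hxne
      rw [heval t, ← hxcoe]
      exact hfC _ hvC
    have hsum := sum_eval_eq_zero P hdeg
    rw [← Finset.add_sum_erase Finset.univ _ (Finset.mem_univ (0 : Fin d → ZMod 2))] at hsum
    rw [Finset.sum_eq_zero (fun t ht => hzero t (Finset.ne_of_mem_erase ht)), add_zero] at hsum
    have h0 : MvPolynomial.eval (0 : Fin d → ZMod 2) P = g c v := by
      rw [heval 0]
      congr 1
      simp
    rwa [h0] at hsum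
  -- independence of monomials: c must be 0
  apply hcne
  by_contra hcne'
  obtain ⟨S1, hS1⟩ : ∃ S : ι, c S ≠ 0 := by
    by_contra hco; push_neg at hco
    exact hcne' (funext hco)
  have hTne : (Finset.univ.filter fun S : ι => c S ≠ 0).Nonempty :=
    ⟨S1, by simp [hS1]⟩
  obtain ⟨S₀, hS₀mem, hS₀min⟩ :=
    Finset.exists_min_image _ (fun S : ι => S.1.card) hTne
  simp only [Finset.mem_filter, Finset.mem_univ, true_and] at hS₀mem
  set v₀ : Fin r → ZMod 2 := fun i => if i ∈ S₀.1 then 1 else 0 with hv₀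
  have hprod : ∀ S : ι, (∏ i ∈ S.1, v₀ i) = if S.1 ⊆ S₀.1 then 1 else 0 := by
    intro S
    by_cases hsub : S.1 ⊆ S₀.1
    · rw [if_pos hsub]
      exact Finset.prod_eq_one fun i hi => by simp [hv₀, hsub hi]
    · rw [if_neg hsub]
      obtain ⟨i, hi, hni⟩ := Finset.not_subset.mp hsub
      exact Finset.prod_eq_zero hi (by simp [hv₀, hni])
  have hgv : g c v₀ = c S₀ := by
    rw [hg]
    simp only
    rw [Finset.sum_eq_single S₀]
    · rw [hprod S₀, if_pos (subset_refl _), mul_one]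
    · intro S _ hSne
      rw [hprod S]
      by_cases hsub : S.1 ⊆ S₀.1
      · rw [if_pos hsub, mul_one]
        by_contra hcS
        have hss : S.1 ⊂ S₀.1 :=
          lt_of_le_of_ne hsub (fun hh => hSne (Subtype.ext hh))
        have hlt2 : S.1.card < S₀.1.card := Finset.card_lt_card hss
        have := hS₀min S (by simp [hcS])
        omega
      · rw [if_neg hsub, mul_zero]
    · intro hS; exact absurd (Finset.mem_univ S₀) hS
  rw [hf v₀] at hgv
  exact hS₀mem hgv.symm
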